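/- Let (X,τ), (Y,τ'), (Z,τ'') be compact Hausdorff spaces, d₀ a semi metric on X whose induced topology is weaker than τ, and F : Y × Z → X continuous. Define d₁(z,z') = sup{ d₀(F(y,z), F(y,z')) : y ∈ Y } for z,z' ∈ Z. For a state μ on C(Y,ℂ) and z ∈ Z, let φ_{μ,z} : C(X,ℂ) → ℂ be the state φ_{μ,z}(a) = μ(y ↦ a(F(y,z))). Let ρ_L(φ,ψ) = sup{ |φ(a) − ψ(a)| : a ∈ C(X,ℂ), |a(p) − a(q)| ≤ d₀(p,q) for all p,q ∈ X }. Then for all z, z' ∈ Z: d₁(z,z') = sup{ ρ_L(φ_{μ,z}, φ_{μ,z'}) : μ ∈ S(C(Y,ℂ)) }. -/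

import Mathlib

open scoped ENNReal

noncomputable section

variable {X Y Z : Type*} [TopologicalSpace X] [CompactSpace X] [T2Space X]
  [TopologicalSpace Y] [CompactSpace Y] [T2Space Y]
  [TopologicalSpace Z] [CompactSpace Z] [T2Space Z]

/-- A state on the C*-algebra `C(Y, ℂ)`: a continuous linear functional sending the unit to
`1` and taking nonnegative real values on positive elements `star a * a`. -/
def IsState (φ : C(Y, ℂ) →L[ℂ] ℂ) : Prop :=
  φ 1 = 1 ∧ ∀ a : C(Y, ℂ), 0 ≤ (φ (star a * a)).re ∧ (φ (star a * a)).im = 0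

/-- The state `φ_{μ,z} : a ↦ μ(y ↦ a (F (y, z)))` on `C(X, ℂ)`, for `μ` a state on
`C(Y, ℂ)` and `z ∈ Z`. -/
def phi (F : C(Y × Z, X)) (μ : C(Y, ℂ) →L[ℂ] ℂ) (z : Z) (a : C(X, ℂ)) : ℂ :=
  μ (a.comp ⟨fun y => F (y, z), by fun_prop⟩)

lemma state_nonneg (μ : C(Y, ℂ) →L[ℂ] ℂ) (hμ : IsState μ)
    (f : C(Y, ℂ)) (hf : ∀ y, (f y).im = 0 ∧ 0 ≤ (f y).re) :
    0 ≤ (μ f).re ∧ (μ f).im = 0 := by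
  set g : C(Y, ℂ) := ⟨fun y => (Real.sqrt (f y).re : ℂ),
    Complex.continuous_ofReal.comp (Real.continuous_sqrt.comp
      (Complex.continuous_re.comp f.continuous))⟩ with hg
  have key : star g * g = f := by
    ext y
    simp only [ContinuousMap.mul_apply, ContinuousMap.star_apply, hg, ContinuousMap.coe_mk]
    rw [Complex.star_def, Complex.conj_ofReal, ← Complex.ofReal_mul,
      Real.mul_self_sqrt (hf y).2]
    exact Complex.ext rfl (by simp [(hf y).1])
  rw [← key]
  exact hμ.2 g

lemma state_real (μ : C(Y, ℂ) →L[ℂ] ℂ) (hμ : IsState μ)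
    (f : C(Y, ℂ)) (hf : ∀ y, (f y).im = 0) :
    (μ f).im = 0 ∧ (μ f).re ≤ ‖f‖ := by
  set h : C(Y, ℂ) := (‖f‖ : ℂ) • (1 : C(Y, ℂ)) - f with hh
  have hmem : ∀ y, (h y).im = 0 ∧ 0 ≤ (h y).re := by
    intro y
    have h1 : |(f y).re| ≤ ‖f y‖ := Complex.abs_re_le_norm _
    have h2 : ‖f y‖ ≤ ‖f‖ := f.norm_coe_le_norm y
    constructor
    · simp [hh, hf y]
    · simp only [hh, ContinuousMap.sub_apply, ContinuousMap.smul_apply,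
        ContinuousMap.one_apply, smul_eq_mul, mul_one, Complex.sub_re, Complex.ofReal_re]
      have := (abs_le.mp h1).2
      linarith
  have hA := state_nonneg μ hμ h hmem
  have hμh : μ h = (‖f‖ : ℂ) - μ f := by
    simp [hh, map_sub, map_smul, hμ.1]
  rw [hμh] at hA
  constructor
  · have := hA.2
    simp only [Complex.sub_im, Complex.ofReal_im] at this
    linarith
  · have := hA.1
    simp only [Complex.sub_re, Complex.ofReal_re] at this
    linarith

lemma state_norm_le (μ : C(Y, ℂ) →L[ℂ] ℂ) (hμ : IsState μ)
    (b : C(Y, ℂ)) : ‖μ b‖ ≤ ‖b‖ := by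
  rcases eq_or_ne (μ b) 0 with h | h
  · simp [h]
  · set t := μ b with ht
    set c : C(Y, ℂ) := ((starRingEnd ℂ) t / (‖t‖ : ℂ)) • b with hc
    have htn : (‖t‖ : ℝ) ≠ 0 := norm_ne_zero_iff.mpr h
    have hμc : μ c = (‖t‖ : ℂ) := by
      rw [hc, map_smul, smul_eq_mul, ← ht, div_mul_eq_mul_div, Complex.conj_mul']
      have h0 : (‖t‖ : ℂ) ≠ 0 := by exact_mod_cast htn
      field_simp
    set u : C(Y, ℂ) := ⟨fun y => ((c y).re : ℂ),
      Complex.continuous_ofReal.comp (Complex.continuous_re.comp c.continuous)⟩ with hu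
    set v : C(Y, ℂ) := ⟨fun y => ((c y).im : ℂ),
      Complex.continuous_ofReal.comp (Complex.continuous_im.comp c.continuous)⟩ with hv
    have hcuv : c = u + Complex.I • v := by
      ext y
      simp only [ContinuousMap.add_apply, ContinuousMap.smul_apply, hu, hv,
        ContinuousMap.coe_mk, smul_eq_mul]
      rw [mul_comm]
      exact (Complex.re_add_im (c y)).symm
    have hru := state_real μ hμ u (fun y => by simp [hu])
    have hrv := state_real μ hμ v (fun y => by simp [hv])
    have hre : ‖t‖ = (μ u).re := by
      have : μ c = μ u + Complex.I * μ v := by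
        rw [hcuv, map_add, map_smul, smul_eq_mul]
      rw [hμc] at this
      have := congrArg Complex.re this
      simp only [Complex.ofReal_re, Complex.add_re, Complex.mul_re, Complex.I_re,
        Complex.I_im, zero_mul, one_mul, zero_sub] at this
      rw [hrv.1] at this
      linarith
    have hun : ‖u‖ ≤ ‖c‖ := by
      apply ContinuousMap.norm_le _ (norm_nonneg c) |>.mpr
      intro y
      simp only [hu, ContinuousMap.coe_mk, Complex.norm_real]
      exact (Complex.abs_re_le_norm _).trans (c.norm_coe_le_norm y)
    have hcb : ‖c‖ = ‖b‖ := by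
      rw [hc, norm_smul]
      have : ‖(starRingEnd ℂ) t / (‖t‖ : ℂ)‖ = 1 := by
        rw [norm_div, RCLike.norm_conj, Complex.norm_real, norm_norm, div_self htn]
      rw [this, one_mul]
    calc ‖t‖ = (μ u).re := hre
      _ ≤ ‖u‖ := hru.2
      _ ≤ ‖c‖ := hun
      _ = ‖b‖ := hcb

/-- part of the Theorem of Section 4 of the paper.  Let `X, Y, Z` be
compact Hausdorff spaces, `d₀` a semi metric on `X` whose induced topology is weaker than the
topology of `X`, and `F : Y × Z → X` continuous.  Define
`d₁(z, z') = sup_y d₀(F(y,z), F(y,z'))`.  Then `d₁(z, z')` equals the supremum over states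
`μ` on `C(Y, ℂ)` of the Monge–Kantorovich distance `ρ_L(φ_{μ,z}, φ_{μ,z'})`, where
`ρ_L(φ, ψ) = sup { |φ a - ψ a| : a ∈ C(X, ℂ), |a p - a q| ≤ d₀ p q ∀ p q }`. -/
theorem d1_eq_sup_rhoL (d₀ : X → X → ℝ)
    (d₀_nonneg : ∀ x y, 0 ≤ d₀ x y)
    (d₀_refl : ∀ x, d₀ x x = 0)
    (d₀_symm : ∀ x y, d₀ x y = d₀ y x)
    (d₀_triangle : ∀ x y z, d₀ x z ≤ d₀ x y + d₀ y z)
    (hweaker : ∀ (x : X) (ε : ℝ), 0 < ε →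
      ∃ U : Set X, IsOpen U ∧ x ∈ U ∧ ∀ y ∈ U, d₀ x y < ε)
    (F : C(Y × Z, X)) :
    ∀ z z' : Z,
      (⨆ y : Y, ENNReal.ofReal (d₀ (F (y, z)) (F (y, z')))) =
        ⨆ μ : {φ : C(Y, ℂ) →L[ℂ] ℂ // IsState φ},
          ⨆ a ∈ {a : C(X, ℂ) | ∀ p q : X, ‖a p - a q‖ ≤ d₀ p q},
            (‖phi F μ.1 z a - phi F μ.1 z' a‖₊ : ℝ≥0∞) := by
  intro z z'
  have hcont : ∀ x₀ : X, Continuous fun p => d₀ p x₀ := by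
    intro x₀
    rw [continuous_iff_continuousAt]
    intro p
    apply Metric.tendsto_nhds.mpr
    intro ε hε
    obtain ⟨U, hU, hpU, hd⟩ := hweaker p ε hε
    filter_upwards [hU.mem_nhds hpU] with q hq
    have h1 : d₀ q x₀ ≤ d₀ q p + d₀ p x₀ := d₀_triangle _ _ _
    have h2 : d₀ p x₀ ≤ d₀ p q + d₀ q x₀ := d₀_triangle _ _ _
    have h3 : d₀ p q < ε := hd q hq
    have h4 : d₀ q p = d₀ p q := d₀_symm _ _
    rw [Real.dist_eq, abs_sub_lt_iff]
    constructor <;> linarith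
  rcases isEmpty_or_nonempty Y with hY | hY
  · have hS : IsEmpty {φ : C(Y, ℂ) →L[ℂ] ℂ // IsState φ} := by
      constructor
      rintro ⟨μ, hμ1, -⟩
      have h1 : (1 : C(Y, ℂ)) = 0 := by ext y; exact (hY.false y).elim
      rw [h1, map_zero] at hμ1
      exact one_ne_zero hμ1.symm
    rw [iSup_of_empty, iSup_of_empty]
  · apply le_antisymm
    · apply iSup_le
      intro y
      set x₀ := F (y, z') with hx₀
      set μ0 : C(Y, ℂ) →L[ℂ] ℂ := ContinuousMap.evalCLM (R := ℂ) y with hμ0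
      have hμ0app : ∀ f : C(Y, ℂ), μ0 f = f y := fun f => rfl
      have hstate : IsState μ0 := by
        constructor
        · rfl
        · intro a
          have h1 : μ0 (star a * a) = (starRingEnd ℂ) (a y) * a y := rfl
          rw [h1]
          constructor
          · simp only [Complex.mul_re, Complex.conj_re, Complex.conj_im]
            nlinarith [sq_nonneg (a y).re, sq_nonneg (a y).im]
          · simp only [Complex.mul_im, Complex.conj_re, Complex.conj_im]
            ring
      set a₀ : C(X, ℂ) := ⟨fun p => (d₀ p x₀ : ℂ),
        Complex.continuous_ofReal.comp (hcont x₀)⟩ with ha₀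
      have ha₀mem : a₀ ∈ {a : C(X, ℂ) | ∀ p q : X, ‖a p - a q‖ ≤ d₀ p q} := by
        intro p q
        simp only [ha₀, ContinuousMap.coe_mk]
        rw [← Complex.ofReal_sub, Complex.norm_real, Real.norm_eq_abs, abs_sub_le_iff]
        have h1 : d₀ p x₀ ≤ d₀ p q + d₀ q x₀ := d₀_triangle _ _ _
        have h2 : d₀ q x₀ ≤ d₀ q p + d₀ p x₀ := d₀_triangle _ _ _
        have h3 : d₀ q p = d₀ p q := d₀_symm _ _
        constructor <;> linarith
      have hval : phi F μ0 z a₀ - phi F μ0 z' a₀ = (d₀ (F (y, z)) x₀ : ℂ) := by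
        show a₀ (F (y, z)) - a₀ (F (y, z')) = _
        simp only [ha₀, ContinuousMap.coe_mk, ← hx₀, d₀_refl x₀, Complex.ofReal_zero,
          sub_zero]
      have heq : ENNReal.ofReal (d₀ (F (y, z)) x₀) =
          (‖phi F μ0 z a₀ - phi F μ0 z' a₀‖₊ : ℝ≥0∞) := by
        rw [hval, ← enorm_eq_nnnorm, ← ofReal_norm, Complex.norm_real, Real.norm_eq_abs,
          abs_of_nonneg (d₀_nonneg _ _)]
      rw [heq]
      refine le_trans ?_ (le_iSup _ (⟨μ0, hstate⟩ : {φ : C(Y, ℂ) →L[ℂ] ℂ // IsState φ}))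
      exact le_iSup₂_of_le a₀ ha₀mem le_rfl
    · apply iSup_le
      rintro ⟨μ, hμ⟩
      apply iSup₂_le
      intro a ha
      set b : C(Y, ℂ) := a.comp ⟨fun y => F (y, z), by fun_prop⟩ -
        a.comp ⟨fun y => F (y, z'), by fun_prop⟩ with hb
      have hdiff : phi F μ z a - phi F μ z' a = μ b := (map_sub μ _ _).symm
      have hby : ∀ y : Y, ‖b y‖ ≤ d₀ (F (y, z)) (F (y, z')) := by
        intro y
        simpa [hb] using ha (F (y, z)) (F (y, z'))
      obtain ⟨y₀, -, hy₀⟩ := IsCompact.exists_isMaxOn (isCompact_univ (X := Y))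
        Set.univ_nonempty (b.continuous.norm.continuousOn)
      have hnb : ‖b‖ ≤ ‖b y₀‖ := by
        apply ContinuousMap.norm_le _ (norm_nonneg _) |>.mpr
        intro y
        exact hy₀ (Set.mem_univ y)
      have hfinal : ‖μ b‖ ≤ d₀ (F (y₀, z)) (F (y₀, z')) :=
        ((state_norm_le μ hμ b).trans hnb).trans (hby y₀)
      calc (‖phi F μ z a - phi F μ z' a‖₊ : ℝ≥0∞)
          = ENNReal.ofReal ‖μ b‖ := by rw [hdiff, ← enorm_eq_nnnorm, ofReal_norm]
        _ ≤ ENNReal.ofReal (d₀ (F (y₀, z)) (F (y₀, z'))) := ENNReal.ofReal_le_ofReal hfinal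
        _ ≤ ⨆ y : Y, ENNReal.ofReal (d₀ (F (y, z)) (F (y, z'))) := le_iSup (fun y : Y => ENNReal.ofReal (d₀ (F (y, z)) (F (y, z')))) y₀

end
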